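/- For all natural numbers n, g, X with 1 ≤ g ≤ n and 1 ≤ X, one has C(n+X, X)·C(n, g) + (g−1)·C(g+X−1, X−1)·C(n+X, g+X) + (X−1)·C(g+X−1, X)·C(n+X, g+X) = 2g·C(g+X−1, X−1)·C(n+X, g+X). -/

import Mathlib

theorem stmt6 (n g X : ℕ) (hg : 1 ≤ g) (hgn : g ≤ n) (hX : 1 ≤ X) :
    (n + X).choose X * n.choose g
      + (g - 1) * ((g + X - 1).choose (X - 1) * (n + X).choose (g + X))
      + (X - 1) * ((g + X - 1).choose X * (n + X).choose (g + X)) =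
    2 * g * ((g + X - 1).choose (X - 1) * (n + X).choose (g + X)) := by
  obtain ⟨g', rfl⟩ : ∃ g', g = g' + 1 := ⟨g - 1, (Nat.succ_pred_eq_of_pos hg).symm⟩
  obtain ⟨X', rfl⟩ : ∃ X', X = X' + 1 := ⟨X - 1, (Nat.succ_pred_eq_of_pos hX).symm⟩
  have h1 : (n + (X' + 1)).choose (X' + 1) * n.choose (g' + 1)
      = (n + (X' + 1)).choose (g' + 1 + (X' + 1)) * (g' + 1 + (X' + 1)).choose (X' + 1) := by
    rw [Nat.choose_mul (by omega)]
    congr 2 <;> omega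
  have h2 : (g' + 1 + (X' + 1)).choose (X' + 1)
      = (g' + X' + 1).choose X' + (g' + X' + 1).choose (X' + 1) := by
    have := Nat.choose_succ_succ (g' + X' + 1) X'
    convert this using 2 <;> omega
  have h3 : (g' + X' + 1).choose (X' + 1) * (X' + 1) = (g' + X' + 1).choose X' * (g' + 1) := by
    have := Nat.choose_succ_right_eq (g' + X' + 1) X'
    rw [this]; congr 1; omega
  have e1 : g' + 1 + (X' + 1) - 1 = g' + X' + 1 := by omega
  have e2 : g' + 1 - 1 = g' := by omega
  have e3 : X' + 1 - 1 = X' := by omega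
  rw [h1, h2, e1, e2, e3]
  nlinarith [h3]
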